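/- For every real y > 0, the improper integral over the real line ∫_{-∞}^{∞} 4y / (((x-1)² + y²)(x² + y²)) dx equals 8π/(1 + 4y²). -/

import Mathlib

open Real MeasureTheory Filter Topology Set

private lemma wedge_ratio_tendsto (y : ℝ) (hy : 0 < y) (l : Filter ℝ)
    (hinv : Tendsto (fun x : ℝ => x⁻¹) l (𝓝 0)) (hne : ∀ᶠ x in l, x ≠ 0) :
    Tendsto (fun x : ℝ => (x ^ 2 + y ^ 2) / ((x - 1) ^ 2 + y ^ 2)) l (𝓝 1) := by
  have h1 : Tendsto (fun x : ℝ => y * x⁻¹) l (𝓝 0) := by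
    simpa using hinv.const_mul y
  have hsq : Tendsto (fun x : ℝ => (y * x⁻¹) ^ 2) l (𝓝 (0 ^ 2)) := h1.pow 2
  have hnum : Tendsto (fun x : ℝ => 1 + (y * x⁻¹) ^ 2) l (𝓝 1) := by
    simpa using hsq.const_add 1
  have hden : Tendsto (fun x : ℝ => (1 - x⁻¹) ^ 2 + (y * x⁻¹) ^ 2) l (𝓝 1) := by
    have h2 : Tendsto (fun x : ℝ => (1 - x⁻¹) ^ 2) l (𝓝 ((1 - 0) ^ 2)) :=
      (tendsto_const_nhds.sub hinv).pow 2
    simpa using h2.add hsq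
  have key : Tendsto (fun x : ℝ => (1 + (y * x⁻¹) ^ 2) / ((1 - x⁻¹) ^ 2 + (y * x⁻¹) ^ 2))
      l (𝓝 1) := by
    simpa [Pi.div_def] using hnum.div hden one_ne_zero
  refine key.congr' ?_
  filter_upwards [hne] with x hx
  have hv : (x - 1) ^ 2 + y ^ 2 ≠ 0 := by positivity
  field_simp

theorem wedge_integrand_x_integral (y : ℝ) (hy : 0 < y) :
    (∫ x : ℝ, 4 * y / (((x - 1) ^ 2 + y ^ 2) * (x ^ 2 + y ^ 2))) =
      8 * π / (1 + 4 * y ^ 2) := by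
  have hy' : y ≠ 0 := hy.ne'
  have hc : (1 : ℝ) + 4 * y ^ 2 ≠ 0 := by positivity
  set f : ℝ → ℝ := fun x => 4 * y / (((x - 1) ^ 2 + y ^ 2) * (x ^ 2 + y ^ 2)) with hf
  set F : ℝ → ℝ := fun x => (4 * y / (1 + 4 * y ^ 2)) *
      (Real.log (x ^ 2 + y ^ 2) - Real.log ((x - 1) ^ 2 + y ^ 2) +
        (Real.arctan (x / y) + Real.arctan ((x - 1) / y)) / y) with hF
  have hu : ∀ x : ℝ, (0:ℝ) < x ^ 2 + y ^ 2 := fun x => by positivity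
  have hv : ∀ x : ℝ, (0:ℝ) < (x - 1) ^ 2 + y ^ 2 := fun x => by positivity
  -- derivative
  have hderiv : ∀ x : ℝ, HasDerivAt F (f x) x := by
    intro x
    have hu' : HasDerivAt (fun x : ℝ => x ^ 2 + y ^ 2) (2 * x) x := by
      simpa using (hasDerivAt_pow 2 x).add_const (y ^ 2)
    have hv' : HasDerivAt (fun x : ℝ => (x - 1) ^ 2 + y ^ 2) (2 * (x - 1)) x := by
      have : HasDerivAt (fun x : ℝ => (x - 1) ^ 2 + y ^ 2) (2 * (x-1) ^ 1 * 1) x :=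
        (((hasDerivAt_id x).sub_const 1).pow 2).add_const (y ^ 2)
      simpa using this
    have hlogu : HasDerivAt (fun x : ℝ => Real.log (x ^ 2 + y ^ 2))
        ((x ^ 2 + y ^ 2)⁻¹ * (2 * x)) x :=
      by have := (Real.hasDerivAt_log (hu x).ne').comp x hu'; exact this
    have hlogv : HasDerivAt (fun x : ℝ => Real.log ((x - 1) ^ 2 + y ^ 2))
        (((x - 1) ^ 2 + y ^ 2)⁻¹ * (2 * (x - 1))) x :=
      by have := (Real.hasDerivAt_log (hv x).ne').comp x hv'; exact this
    have hat1 : HasDerivAt (fun x : ℝ => Real.arctan (x / y))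
        ((1 / (1 + (x / y) ^ 2)) * (1 / y)) x := by
      have := (Real.hasDerivAt_arctan (x / y)).comp x ((hasDerivAt_id x).div_const y)
      simpa [Function.comp_def] using this
    have hat2 : HasDerivAt (fun x : ℝ => Real.arctan ((x - 1) / y))
        ((1 / (1 + ((x - 1) / y) ^ 2)) * (1 / y)) x := by
      have := (Real.hasDerivAt_arctan ((x - 1) / y)).comp x
        (((hasDerivAt_id x).sub_const 1).div_const y)
      simpa [Function.comp_def] using this
    have hD : HasDerivAt F ((4 * y / (1 + 4 * y ^ 2)) *
        ((x ^ 2 + y ^ 2)⁻¹ * (2 * x) - ((x - 1) ^ 2 + y ^ 2)⁻¹ * (2 * (x - 1)) +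
          ((1 / (1 + (x / y) ^ 2)) * (1 / y) + (1 / (1 + ((x - 1) / y) ^ 2)) * (1 / y)) / y)) x :=
      (((hlogu.sub hlogv).add ((hat1.add hat2).div_const y)).const_mul _)
    convert hD using 1
    have h1 : (1:ℝ) + (x / y) ^ 2 ≠ 0 := by positivity
    have h2 : (1:ℝ) + ((x - 1) / y) ^ 2 ≠ 0 := by positivity
    rw [hf]
    field_simp
    ring
  -- integrability
  have hcont : Continuous f := by
    apply continuous_const.div
    · fun_prop
    · intro x
      exact (mul_pos (hv x) (hu x)).ne'
  have hint : Integrable f := by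
    have hbase : Integrable (fun x : ℝ => (1 + (x / y) ^ 2)⁻¹) := by
      simpa [div_eq_mul_inv] using integrable_inv_one_add_sq.comp_div hy'
    have hg : Integrable (fun x : ℝ => (4 / y) * ((y:ℝ) ^ 2)⁻¹ * (1 + (x / y) ^ 2)⁻¹) :=
      hbase.const_mul _
    refine hg.mono hcont.aestronglyMeasurable (ae_of_all _ fun x => ?_)
    have hfx : 0 ≤ f x := by
      show (0:ℝ) ≤ 4 * y / (((x - 1) ^ 2 + y ^ 2) * (x ^ 2 + y ^ 2))
      positivity
    have hb : f x ≤ 4 / (y * (x ^ 2 + y ^ 2)) := by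
      show 4 * y / (((x - 1) ^ 2 + y ^ 2) * (x ^ 2 + y ^ 2)) ≤ 4 / (y * (x ^ 2 + y ^ 2))
      rw [div_le_div_iff₀ (by positivity) (by positivity)]
      nlinarith [mul_nonneg (sq_nonneg (x - 1)) (hu x).le]
    have hgx : 4 / y * ((y:ℝ) ^ 2)⁻¹ * (1 + (x / y) ^ 2)⁻¹ =
        4 / (y * (x ^ 2 + y ^ 2)) := by
      field_simp
      ring
    calc ‖f x‖ = f x := by rw [Real.norm_eq_abs, abs_of_nonneg hfx]
      _ ≤ 4 / (y * (x ^ 2 + y ^ 2)) := hb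
      _ = 4 / y * ((y:ℝ) ^ 2)⁻¹ * (1 + (x / y) ^ 2)⁻¹ := hgx.symm
      _ ≤ ‖4 / y * ((y:ℝ) ^ 2)⁻¹ * (1 + (x / y) ^ 2)⁻¹‖ := le_abs_self _
  have inv_atBot0 : Tendsto (fun x : ℝ => x⁻¹) atBot (𝓝 0) := by
    have h1 : Tendsto (fun x : ℝ => -x) atBot atTop := tendsto_neg_atBot_atTop
    have h2 : Tendsto (fun x : ℝ => (-x)⁻¹) atBot (𝓝 0) := h1.inv_tendsto_atTop
    have h3 : (fun x : ℝ => x⁻¹) = fun x : ℝ => -((-x)⁻¹) := by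
      funext x
      rw [inv_neg, neg_neg]
    rw [h3]
    simpa using h2.neg
  -- limits of F
  have hlog_lim : ∀ l : Filter ℝ, Tendsto (fun x : ℝ => x⁻¹) l (𝓝 0) → (∀ᶠ x in l, x ≠ 0) →
      Tendsto (fun x : ℝ => Real.log (x ^ 2 + y ^ 2) - Real.log ((x - 1) ^ 2 + y ^ 2))
        l (𝓝 0) := by
    intro l hinv hne
    have h := (Real.continuousAt_log one_ne_zero).tendsto.comp
      (wedge_ratio_tendsto y hy l hinv hne)
    rw [Real.log_one] at h
    refine h.congr fun x => ?_
    simp only [Function.comp]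
    rw [Real.log_div (hu x).ne' (hv x).ne']
  have htop : Tendsto F atTop (𝓝 ((4 * y / (1 + 4 * y ^ 2)) * (0 + (π / 2 + π / 2) / y))) := by
    have ha1 : Tendsto (fun x : ℝ => Real.arctan (x / y)) atTop (𝓝 (π / 2)) := by
      exact tendsto_nhds_of_tendsto_nhdsWithin
        (Real.tendsto_arctan_atTop.comp (tendsto_id.atTop_div_const hy))
    have ha2 : Tendsto (fun x : ℝ => Real.arctan ((x - 1) / y)) atTop (𝓝 (π / 2)) := by
      exact tendsto_nhds_of_tendsto_nhdsWithin
        (Real.tendsto_arctan_atTop.comp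
          ((tendsto_atTop_add_const_right atTop (-1) tendsto_id).atTop_div_const hy))
    exact (((hlog_lim atTop tendsto_inv_atTop_zero (eventually_ne_atTop 0)).add
      ((ha1.add ha2).div_const y)).const_mul _)
  have hbot : Tendsto F atBot (𝓝 ((4 * y / (1 + 4 * y ^ 2)) * (0 + (-(π / 2) + -(π / 2)) / y))) := by
    have ha1 : Tendsto (fun x : ℝ => Real.arctan (x / y)) atBot (𝓝 (-(π / 2))) := by
      exact tendsto_nhds_of_tendsto_nhdsWithin
        (Real.tendsto_arctan_atBot.comp (tendsto_id.atBot_div_const hy))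
    have ha2 : Tendsto (fun x : ℝ => Real.arctan ((x - 1) / y)) atBot (𝓝 (-(π / 2))) := by
      exact tendsto_nhds_of_tendsto_nhdsWithin
        (Real.tendsto_arctan_atBot.comp
          ((tendsto_atBot_add_const_right atBot (-1) tendsto_id).atBot_div_const hy))
    exact (((hlog_lim atBot inv_atBot0 (eventually_ne_atBot 0)).add
      ((ha1.add ha2).div_const y)).const_mul _)
  -- assemble
  have hIoi : ∫ x in Ioi (0:ℝ), f x =
      (4 * y / (1 + 4 * y ^ 2)) * (0 + (π / 2 + π / 2) / y) - F 0 :=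
    integral_Ioi_of_hasDerivAt_of_tendsto' (fun x _ => hderiv x) hint.integrableOn htop
  have hIic : ∫ x in Iic (0:ℝ), f x =
      F 0 - (4 * y / (1 + 4 * y ^ 2)) * (0 + (-(π / 2) + -(π / 2)) / y) :=
    integral_Iic_of_hasDerivAt_of_tendsto' (fun x _ => hderiv x) hint.integrableOn hbot
  have hsplit : (∫ x in Iic (0:ℝ), f x) + ∫ x in Ioi (0:ℝ), f x = ∫ x : ℝ, f x :=
    intervalIntegral.integral_Iic_add_Ioi hint.integrableOn hint.integrableOn
  rw [← hsplit, hIic, hIoi]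
  field_simp
  ring
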